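/- For an infinite alphabet A, the shift map σ : Σ_A → Σ_A restricted to Σ_A \ {∅} is continuous. -/

import Mathlib

open Set Filter Topology

/-- Elements of the full shift `Σ_A`: `Option`-valued sequences that stay `none`
once they are `none` (so they are either everywhere-defined infinite sequences,
or finite words followed by `none`s; the empty word is the all-`none` sequence). -/
def IsWordFun {A : Type*} (x : ℕ → Option A) : Prop :=
  ∀ m n : ℕ, m ≤ n → x m = none → x n = none

/-- The full shift `Σ_A = A^ℕ ∪ {finite words over A}`. -/
def FullShift (A : Type*) : Type _ := {x : ℕ → Option A // IsWordFun x}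

namespace FullShift

variable {A B : Type*}

/-- The length of an element of the full shift, in `ℕ∞`. -/
noncomputable def len (x : FullShift A) : ℕ∞ :=
  sInf {n : ℕ∞ | ∃ m : ℕ, n = (m : ℕ∞) ∧ x.1 m = none}

/-- The shift map `σ`, deleting the first letter. -/
def shift (x : FullShift A) : FullShift A :=
  ⟨fun n => x.1 (n + 1), fun m n h hm => x.2 (m + 1) (n + 1) (by omega) hm⟩

/-- The empty word `∅`. -/
def emptyWord : FullShift A := ⟨fun _ => none, fun _ _ _ _ => rfl⟩

/-- The finite word determined by a list. -/
def word (l : List A) : FullShift A :=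
  ⟨fun n => l[n]?, by
    intro m n h hm
    rw [List.getElem?_eq_none_iff] at hm ⊢
    omega⟩

/-- The infinite sequence determined by a function `ℕ → A`. -/
def infSeq (g : ℕ → A) : FullShift A :=
  ⟨fun n => some (g n), by intro m n _ hm; simp at hm⟩

/-- Generalized cylinder set `Z(w, F)`: elements beginning with the finite word `w`
whose next letter, if any, does not lie in the finite set `F`. -/
def Cyl (w : List A) (F : Finset A) : Set (FullShift A) :=
  {y | (∀ i < w.length, y.1 i = w[i]?) ∧ ∀ a ∈ F, y.1 w.length ≠ some a}

/-- The topology on `Σ_A` generated by the generalized cylinder sets. -/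
instance : TopologicalSpace (FullShift A) :=
  TopologicalSpace.generateFrom {S | ∃ (w : List A) (F : Finset A), S = Cyl w F}

/-- A shift space: closed, shift-invariant, with the infinite-extension property. -/
def IsShiftSpace (Λ : Set (FullShift A)) : Prop :=
  IsClosed Λ ∧ (∀ x ∈ Λ, shift x ∈ Λ) ∧
    ∀ x ∈ Λ, ∀ n : ℕ, len x = (n : ℕ∞) →
      {a : A | ∃ z ∈ Λ, (∀ i < n, z.1 i = x.1 i) ∧ z.1 n = some a}.Infinite

/-- `u` occurs as a subblock of `x`. -/
def Occurs (u : List A) (x : FullShift A) : Prop :=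
  ∃ i : ℕ, ∀ j < u.length, x.1 (i + j) = u[j]?

/-- The infinite sequences avoiding every word in `Fb` as a subblock. -/
def XinfL (Fb : Set (List A)) : Set (FullShift A) :=
  {x | (∀ n, x.1 n ≠ none) ∧ ∀ u ∈ Fb, ¬ Occurs u x}

/-- The shift space `X_F` determined by the forbidden words `Fb`: the infinite
sequences avoiding `Fb`, together with the finite words `x` such that for
infinitely many `a ∈ A` some extension `x a y` lies in `X_F^inf`. -/
def XL (Fb : Set (List A)) : Set (FullShift A) :=
  XinfL Fb ∪ {x | ∃ n : ℕ, len x = (n : ℕ∞) ∧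
    {a : A | ∃ z ∈ XinfL Fb, (∀ i < n, z.1 i = x.1 i) ∧ z.1 n = some a}.Infinite}

/-- The infinite sequences all of whose length-`N` windows `v` satisfy `ft v = true`
(i.e. avoiding all length-`N` words `w` with `ft w = 0`). -/
def XinfT {N : ℕ} (ft : (Fin N → A) → Bool) : Set (FullShift A) :=
  {x | (∀ n, x.1 n ≠ none) ∧
    ∀ (i : ℕ) (v : Fin N → A), (∀ j : Fin N, x.1 (i + (j : ℕ)) = some (v j)) → ft v = true}

/-- The shift space `X_f` determined by forbidding the length-`N` words `w`
with `ft w = 0`. -/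
def XT {N : ℕ} (ft : (Fin N → A) → Bool) : Set (FullShift A) :=
  XinfT ft ∪ {x | ∃ n : ℕ, len x = (n : ℕ∞) ∧
    {a : A | ∃ z ∈ XinfT ft, (∀ i < n, z.1 i = x.1 i) ∧ z.1 n = some a}.Infinite}

/-- `Y` is an `M`-step shift space: determined by forbidden words of length `M + 1`,
equivalently by a function `g̃ : B^{M+1} → {0,1}`. -/
def IsStepShift (M : ℕ) (Y : Set (FullShift B)) : Prop :=
  ∃ gt : (Fin (M + 1) → B) → Bool, Y = XT gt

/-- `φ` is a conjugacy from `Λ` onto `Y`: bijective, continuous, shift-commuting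
and length-preserving. -/
def IsConjugacy (Λ : Set (FullShift A)) (Y : Set (FullShift B))
    (φ : FullShift A → FullShift B) : Prop :=
  Set.BijOn φ Λ Y ∧ ContinuousOn φ Λ ∧
    (∀ x ∈ Λ, φ (shift x) = shift (φ x)) ∧ ∀ x ∈ Λ, len (φ x) = len x

/-- `Λ` and `Y` are conjugate shift spaces. -/
def Conjugate (Λ : Set (FullShift A)) (Y : Set (FullShift B)) : Prop :=
  ∃ φ : FullShift A → FullShift B, IsConjugacy Λ Y φ

/-- The periodic sequence `(x_1 ⋯ x_M b)^∞` of period `M + 1`. -/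
def per (M : ℕ) (x : Fin M → A) (b : A) : ℕ → A :=
  fun n => if h : n % (M + 1) < M then x ⟨n % (M + 1), h⟩ else b

end FullShift

namespace FullShift

lemma exists_some_of_ne_empty {A : Type*} {y : FullShift A} (h : y ≠ emptyWord) :
    ∃ a, y.1 0 = some a := by
  cases h0 : y.1 0 with
  | none =>
      exact absurd (Subtype.ext (funext fun n => y.2 0 n (Nat.zero_le n) h0)) h
  | some a => exact ⟨a, rfl⟩

lemma cyl_open {A : Type*} (w : List A) (F : Finset A) : IsOpen (Cyl w F) :=
  TopologicalSpace.GenerateOpen.basic _ ⟨w, F, rfl⟩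

lemma mem_cyl_cons {A : Type*} {a : A} {w : List A} {F : Finset A} {y : FullShift A} :
    y ∈ Cyl (a :: w) F ↔ y.1 0 = some a ∧ shift y ∈ Cyl w F := by
  constructor
  · rintro ⟨h1, h2⟩
    refine ⟨by simpa using h1 0 (by simp), ?_, ?_⟩
    · intro i hi
      simpa [shift] using h1 (i + 1) (by simpa using hi)
    · intro b hb
      simpa [shift] using h2 b hb
  · rintro ⟨h0, h1, h2⟩
    refine ⟨?_, ?_⟩
    · intro i hi
      cases i with
      | zero => simpa using h0
      | succ n => simpa [shift] using h1 n (by simpa using hi)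
    · intro b hb
      simpa [shift] using h2 b hb

lemma ne_empty_of_fst_some {A : Type*} {y : FullShift A} {a : A}
    (h : y.1 0 = some a) : y ≠ emptyWord := by
  intro he
  rw [he] at h
  simp [emptyWord] at h

end FullShift

/-- The shift map restricted to `Σ_A \ {∅}` is continuous. -/
theorem stmt4 {A : Type*} [Infinite A] :
    ContinuousOn (FullShift.shift : FullShift A → FullShift A)
      {FullShift.emptyWord}ᶜ := by
  have hs : IsOpen ({FullShift.emptyWord}ᶜ : Set (FullShift A)) := by
    have hset : ({FullShift.emptyWord}ᶜ : Set (FullShift A))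
        = ⋃ a : A, FullShift.Cyl [a] ∅ := by
      ext y
      simp only [Set.mem_compl_iff, Set.mem_singleton_iff, Set.mem_iUnion]
      constructor
      · intro h
        obtain ⟨a, ha⟩ := FullShift.exists_some_of_ne_empty h
        exact ⟨a, fun i hi => by
            obtain rfl : i = 0 := by simpa using hi
            simpa using ha,
          fun b hb => by simp at hb⟩
      · rintro ⟨a, h1, -⟩
        exact FullShift.ne_empty_of_fst_some (by simpa using h1 0 (by simp))
    rw [hset]
    exact isOpen_iUnion fun a => FullShift.cyl_open _ _
  rw [continuousOn_open_iff hs]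
  intro t ht
  induction ht with
  | basic S hS =>
      obtain ⟨w, F, rfl⟩ := hS
      have hset : {FullShift.emptyWord}ᶜ ∩ FullShift.shift ⁻¹' FullShift.Cyl w F
          = ⋃ a : A, FullShift.Cyl (a :: w) F := by
        ext y
        simp only [Set.mem_inter_iff, Set.mem_compl_iff, Set.mem_singleton_iff,
          Set.mem_preimage, Set.mem_iUnion, FullShift.mem_cyl_cons]
        constructor
        · rintro ⟨hne, hy⟩
          obtain ⟨a, ha⟩ := FullShift.exists_some_of_ne_empty hne
          exact ⟨a, ha, hy⟩
        · rintro ⟨a, h0, hy⟩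
          exact ⟨FullShift.ne_empty_of_fst_some h0, hy⟩
      rw [hset]
      exact isOpen_iUnion fun a => FullShift.cyl_open _ _
  | univ => simpa using hs
  | inter t1 t2 _ _ ih1 ih2 =>
      have : {FullShift.emptyWord}ᶜ ∩ FullShift.shift ⁻¹' (t1 ∩ t2)
          = ({FullShift.emptyWord}ᶜ ∩ FullShift.shift ⁻¹' t1)
            ∩ ({FullShift.emptyWord}ᶜ ∩ FullShift.shift ⁻¹' t2) := by
        rw [Set.preimage_inter, Set.inter_inter_distrib_left]
      rw [this]
      exact ih1.inter ih2
  | sUnion S _ ih =>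
      have : {FullShift.emptyWord}ᶜ ∩ FullShift.shift ⁻¹' ⋃₀ S
          = ⋃ t ∈ S, {FullShift.emptyWord}ᶜ ∩ FullShift.shift ⁻¹' t := by
        rw [Set.sUnion_eq_biUnion, Set.preimage_iUnion₂, Set.inter_iUnion₂]
      rw [this]
      exact isOpen_biUnion fun t htS => ih t htS
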